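/- Let (X,Σ,μ) be a measure space, 1 ≤ p < ∞, and let 𝓕 ⊆ Λ^p(X) be uniformly essentially bounded, i.e., there exists M_0 > 0 such that |f| ≤ M_0 μ-almost everywhere for every f ∈ 𝓕. Then 𝓕 is totally bounded with respect to the F-norm distance d(f,g) = ν_p(f−g) if and only if 𝓕 is totally bounded in L^p(X) with respect to the L^p norm distance. -/

import Mathlib

open MeasureTheory ENNReal Filter Topology

/-- The F-norm `ν_p(g) = (∫ min(|g|,1)^p dμ)^{1/p}` of the asymptotic `L_p` space. -/
noncomputable def nuF {X : Type*} [MeasurableSpace X] (μ : Measure X) (p : ℝ) (g : X → ℝ) :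
    ℝ≥0∞ :=
  (∫⁻ x, ENNReal.ofReal (min |g x| 1 ^ p) ∂μ) ^ (1 / p)

/-- The `L^p` norm `(∫ |g|^p dμ)^{1/p}`. -/
noncomputable def lpNorm {X : Type*} [MeasurableSpace X] (μ : Measure X) (p : ℝ) (g : X → ℝ) :
    ℝ≥0∞ :=
  (∫⁻ x, ENNReal.ofReal (|g x| ^ p) ∂μ) ^ (1 / p)

/-- Membership in the asymptotic `L_p` space `Λ^p(X)`. -/
def MemLambda {X : Type*} [MeasurableSpace X] (μ : Measure X) (p : ℝ) (f : X → ℝ) : Prop :=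
  Measurable f ∧ ∫⁻ x, ENNReal.ofReal (min |f x| 1 ^ p) ∂μ < ⊤

/-- Membership in `L^p(X)`. -/
def MemLp' {X : Type*} [MeasurableSpace X] (μ : Measure X) (p : ℝ) (f : X → ℝ) : Prop :=
  Measurable f ∧ ∫⁻ x, ENNReal.ofReal (|f x| ^ p) ∂μ < ⊤

/-- The truncation map `T_M(t) = max(-M, min(t, M))`. -/
def trunc (M : ℝ) (t : ℝ) : ℝ := max (-M) (min t M)

/-- A family `F` is totally bounded with respect to a distance `d` if for every `ε > 0`
there are finitely many functions such that every `f ∈ F` is within `ε` of one of them. -/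
def TotallyBoundedDist {X : Type*} (d : (X → ℝ) → (X → ℝ) → ℝ≥0∞) (F : Set (X → ℝ)) : Prop :=
  ∀ ε : ℝ≥0∞, 0 < ε → ∃ G : Finset (X → ℝ), ∀ f ∈ F, ∃ g ∈ G, d f g < ε

lemma nuF_mono {X : Type*} [MeasurableSpace X] {μ : Measure X} {p : ℝ} (hp : 0 ≤ p)
    {f g : X → ℝ} (h : ∀ᵐ x ∂μ, |f x| ≤ |g x|) : nuF μ p f ≤ nuF μ p g := by
  refine ENNReal.rpow_le_rpow (lintegral_mono_ae ?_) (by positivity)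
  filter_upwards [h] with x hx
  exact ENNReal.ofReal_le_ofReal <| Real.rpow_le_rpow (le_min (abs_nonneg _) zero_le_one)
    (min_le_min hx le_rfl) hp

lemma nuF_le_lpNorm {X : Type*} [MeasurableSpace X] {μ : Measure X} {p : ℝ} (hp : 0 ≤ p)
    (f : X → ℝ) : nuF μ p f ≤ lpNorm μ p f := by
  refine ENNReal.rpow_le_rpow (lintegral_mono fun x => ?_) (by positivity)
  exact ENNReal.ofReal_le_ofReal <| Real.rpow_le_rpow (le_min (abs_nonneg _) zero_le_one)
    (min_le_left _ _) hp

lemma lpNorm_le_mul_nuF {X : Type*} [MeasurableSpace X] {μ : Measure X} {p : ℝ} (hp : 0 < p)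
    {c : ℝ} (hc : 1 ≤ c) {f : X → ℝ} (h : ∀ᵐ x ∂μ, |f x| ≤ c) :
    lpNorm μ p f ≤ ENNReal.ofReal c * nuF μ p f := by
  have hc0 : (0:ℝ) ≤ c := zero_le_one.trans hc
  have key : ∫⁻ x, ENNReal.ofReal (|f x| ^ p) ∂μ ≤
      ENNReal.ofReal (c ^ p) * ∫⁻ x, ENNReal.ofReal (min |f x| 1 ^ p) ∂μ := by
    rw [← lintegral_const_mul' _ _ ENNReal.ofReal_ne_top]
    refine lintegral_mono_ae ?_
    filter_upwards [h] with x hx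
    rw [← ENNReal.ofReal_mul (by positivity)]
    refine ENNReal.ofReal_le_ofReal ?_
    rcases le_or_gt (|f x|) 1 with h1 | h1
    · rw [min_eq_left h1]
      exact le_mul_of_one_le_left (by positivity) (Real.one_le_rpow hc hp.le)
    · rw [min_eq_right h1.le, Real.one_rpow, mul_one]
      exact Real.rpow_le_rpow (abs_nonneg _) hx hp.le
  calc lpNorm μ p f ≤ (ENNReal.ofReal (c ^ p) *
        ∫⁻ x, ENNReal.ofReal (min |f x| 1 ^ p) ∂μ) ^ (1/p) :=
        ENNReal.rpow_le_rpow key (by positivity)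
    _ = ENNReal.ofReal c * nuF μ p f := by
        rw [ENNReal.mul_rpow_of_nonneg _ _ (by positivity), nuF,
          ← ENNReal.ofReal_rpow_of_nonneg hc0 hp.le, ← ENNReal.rpow_mul,
          mul_one_div_cancel hp.ne', ENNReal.rpow_one]

lemma trunc_lip (M a b : ℝ) : |trunc M a - trunc M b| ≤ |a - b| := by
  refine (abs_max_sub_max_le_max _ _ _ _).trans ?_
  simp only [sub_self, abs_zero]
  refine max_le (by positivity) ?_
  refine (abs_min_sub_min_le_max _ _ _ _).trans ?_
  simp [abs_nonneg]

lemma trunc_eq_self {M a : ℝ} (ha : |a| ≤ M) : trunc M a = a := by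
  rw [abs_le] at ha
  rw [trunc, min_eq_left ha.2, max_eq_right ha.1]

lemma abs_trunc_le {M : ℝ} (hM : 0 ≤ M) (a : ℝ) : |trunc M a| ≤ M := by
  rw [abs_le, trunc]
  exact ⟨le_max_left _ _, max_le (by linarith) (min_le_right _ _)⟩

theorem stmt18 {X : Type*} [MeasurableSpace X] (μ : Measure X) (p : ℝ) (hp : 1 ≤ p)
    (F : Set (X → ℝ)) (hF : ∀ f ∈ F, MemLambda μ p f)
    (M₀ : ℝ) (hM₀ : 0 < M₀) (hbd : ∀ f ∈ F, ∀ᵐ x ∂μ, |f x| ≤ M₀) :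
    TotallyBoundedDist (fun f g => nuF μ p (f - g)) F ↔
      TotallyBoundedDist (fun u v => lpNorm μ p (u - v)) F := by
  have hp0 : 0 < p := lt_of_lt_of_le one_pos hp
  constructor
  · intro H ε hε
    set c : ℝ := max (2 * M₀) 1 with hc_def
    have hc1 : (1:ℝ) ≤ c := le_max_right _ _
    set C : ℝ≥0∞ := ENNReal.ofReal c with hC_def
    have hC0 : C ≠ 0 := by
      simp only [hC_def, ne_eq, ENNReal.ofReal_eq_zero, not_le]; linarith
    have hCt : C ≠ ⊤ := ENNReal.ofReal_ne_top
    obtain ⟨G, hG⟩ := H (ε / C) (ENNReal.div_pos hε.ne' hCt)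
    classical
    refine ⟨G.image (fun g => trunc M₀ ∘ g), fun f hf => ?_⟩
    obtain ⟨g, hgG, hfg⟩ := hG f hf
    refine ⟨trunc M₀ ∘ g, Finset.mem_image_of_mem _ hgG, ?_⟩
    have hae : ∀ᵐ x ∂μ, |f x - (trunc M₀ ∘ g) x| ≤ |f x - g x| ∧
        |f x - (trunc M₀ ∘ g) x| ≤ c := by
      filter_upwards [hbd f hf] with x hx
      constructor
      · calc |f x - (trunc M₀ ∘ g) x| = |trunc M₀ (f x) - trunc M₀ (g x)| := by
              rw [trunc_eq_self hx]; rfl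
          _ ≤ |f x - g x| := trunc_lip _ _ _
      · calc |f x - (trunc M₀ ∘ g) x| ≤ |f x| + |(trunc M₀ ∘ g) x| := abs_sub _ _
          _ ≤ M₀ + M₀ := add_le_add hx (abs_trunc_le hM₀.le _)
          _ ≤ c := by rw [hc_def]; refine le_max_of_le_left (by linarith)
    have h1 : nuF μ p (f - trunc M₀ ∘ g) ≤ nuF μ p (f - g) :=
      nuF_mono hp0.le (by filter_upwards [hae] with x hx using hx.1)
    have h2 : lpNorm μ p (f - trunc M₀ ∘ g) ≤ C * nuF μ p (f - trunc M₀ ∘ g) :=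
      lpNorm_le_mul_nuF hp0 hc1 (by filter_upwards [hae] with x hx using hx.2)
    calc lpNorm μ p (f - trunc M₀ ∘ g) ≤ C * nuF μ p (f - trunc M₀ ∘ g) := h2
      _ ≤ C * nuF μ p (f - g) := mul_le_mul_right h1 _
      _ < C * (ε / C) := by
          rw [ENNReal.mul_lt_mul_iff_right hC0 hCt]; exact hfg
      _ ≤ ε := ENNReal.mul_div_le
  · intro H ε hε
    obtain ⟨G, hG⟩ := H ε hε
    refine ⟨G, fun f hf => ?_⟩
    obtain ⟨g, hgG, hfg⟩ := hG f hf
    exact ⟨g, hgG, lt_of_le_of_lt (nuF_le_lpNorm hp0.le _) hfg⟩
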